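/- For all integers d and dim with 1 ≤ d ≤ dim and 2 ≤ dim, if m = 10 · 2^d · (d + log₂ dim), then (14 · m · dim)^{2^d} < 2^m. -/
import Mathlib


/-- For `1 ≤ d ≤ dim` and `2 ≤ dim`, with `m = 10·2^d·(d + log₂ dim)` we have
`(14·m·dim)^{2^d} < 2^m` (the right-hand power is a real power). This is the
arithmetic core of the bound `V_H ≤ 10·2^d(d + log₂ dim)` on the VC dimension of
decision trees of height at most `d` over `dim`-dimensional data. -/
theorem stmt10 (d dim : ℕ) (hd : 1 ≤ d) (hddim : d ≤ dim) (hdim : 2 ≤ dim) :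
    (14 * (10 * 2 ^ d * ((d : ℝ) + Real.logb 2 dim)) * dim) ^ (2 ^ d)
      < (2 : ℝ) ^ (10 * 2 ^ d * ((d : ℝ) + Real.logb 2 dim)) := by
  set L : ℝ := (d : ℝ) + Real.logb 2 dim with hLdef
  have hdimpos : (0:ℝ) < dim := by positivity
  have hlogb1 : (1:ℝ) ≤ Real.logb 2 dim := by
    have : Real.logb 2 2 ≤ Real.logb 2 dim := by
      apply Real.logb_le_logb_of_le (by norm_num : (1:ℝ) < 2) (by norm_num)
      exact_mod_cast hdim
    simpa using this
  have hdL : (d:ℝ) ≥ 1 := by exact_mod_cast hd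
  have hL2 : (2:ℝ) ≤ L := by rw [hLdef]; linarith
  have hLpos : (0:ℝ) < L := by linarith
  -- key bound: base < 2 ^ (10 * L)
  have hlog2 : (0.6931471803 : ℝ) < Real.log 2 := Real.log_two_gt_d9
  have h140 : (140:ℝ) ≤ (2:ℝ) ^ ((4:ℝ)*L) := by
    have h8 : (140:ℝ) ≤ (2:ℝ) ^ ((8:ℝ)) := by
      rw [show (8:ℝ) = ((8:ℕ):ℝ) by norm_num, Real.rpow_natCast]; norm_num
    refine h8.trans (Real.rpow_le_rpow_of_exponent_le (by norm_num) (by linarith))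
  have h2d : (2:ℝ) ^ d ≤ (2:ℝ) ^ ((1:ℝ)*L) := by
    rw [← Real.rpow_natCast 2 d]
    exact Real.rpow_le_rpow_of_exponent_le (by norm_num) (by rw [hLdef]; linarith)
  have hdim2 : (dim:ℝ) ≤ (2:ℝ) ^ ((1:ℝ)*L) := by
    have := Real.rpow_logb (b := 2) (x := (dim:ℝ)) (by norm_num) (by norm_num) hdimpos
    calc (dim:ℝ) = (2:ℝ) ^ (Real.logb 2 dim) := this.symm
      _ ≤ (2:ℝ) ^ ((1:ℝ)*L) :=
        Real.rpow_le_rpow_of_exponent_le (by norm_num) (by rw [hLdef]; linarith)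
  have hLlt : L < (2:ℝ) ^ ((4:ℝ)*L) := by
    rw [Real.rpow_def_of_pos (by norm_num)]
    have := Real.add_one_le_exp (Real.log 2 * (4*L))
    have h1 : Real.log 2 * (4*L) ≥ 2 * L := by nlinarith
    linarith
  have hbase : 14 * (10 * 2 ^ d * L) * dim < (2:ℝ) ^ ((10:ℝ)*L) := by
    have hexp : (2:ℝ) ^ ((10:ℝ)*L)
        = (2:ℝ) ^ ((4:ℝ)*L) * (2:ℝ) ^ ((1:ℝ)*L) * (2:ℝ) ^ ((4:ℝ)*L) * (2:ℝ) ^ ((1:ℝ)*L) := by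
      rw [← Real.rpow_add (by norm_num), ← Real.rpow_add (by norm_num),
        ← Real.rpow_add (by norm_num)]
      ring_nf
    rw [hexp]
    have h2dpos : (0:ℝ) < (2:ℝ)^d := by positivity
    calc 14 * (10 * 2 ^ d * L) * dim = 140 * (2:ℝ)^d * L * (dim:ℝ) := by ring
      _ < (2:ℝ) ^ ((4:ℝ)*L) * (2:ℝ) ^ ((1:ℝ)*L) * (2:ℝ) ^ ((4:ℝ)*L) * (2:ℝ) ^ ((1:ℝ)*L) := by
        have p1 : (0:ℝ) < (2:ℝ) ^ ((4:ℝ)*L) := Real.rpow_pos_of_pos (by norm_num) _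
        have p2 : (0:ℝ) < (2:ℝ) ^ ((1:ℝ)*L) := Real.rpow_pos_of_pos (by norm_num) _
        have hstep : 140 * (2:ℝ)^d * L < (2:ℝ) ^ ((4:ℝ)*L) * (2:ℝ) ^ ((1:ℝ)*L) * (2:ℝ) ^ ((4:ℝ)*L) := by
          apply mul_lt_mul' (mul_le_mul h140 h2d (le_of_lt h2dpos) (le_of_lt p1)) hLlt
            (le_of_lt hLpos) (by positivity)
        exact mul_lt_mul hstep hdim2 hdimpos (by positivity)
  -- rewrite RHS
  have hmono : (14 * (10 * 2 ^ d * L) * dim) ^ (2^d)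
      < ((2:ℝ) ^ ((10:ℝ)*L)) ^ (2^d) := by
    apply pow_lt_pow_left₀ hbase (by positivity)
    positivity
  have hrw : ((2:ℝ) ^ ((10:ℝ)*L)) ^ ((2:ℕ)^d) = (2:ℝ) ^ (10 * (2:ℝ) ^ d * L) := by
    rw [← Real.rpow_natCast ((2:ℝ) ^ ((10:ℝ)*L)) (2^d), ← Real.rpow_mul (by norm_num)]
    congr 1
    push_cast
    ring
  calc (14 * (10 * 2 ^ d * L) * dim) ^ (2^d)
      < ((2:ℝ) ^ ((10:ℝ)*L)) ^ (2^d) := hmono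
    _ = (2:ℝ) ^ (10 * (2:ℝ) ^ d * L) := hrw
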